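/- For every t ≥ 0, every finite sequence k₁,…,k_t ∈ {0,…,M−1}, and every ℓ ∈ {0,…,M}: Σ_{j=ℓ}^{M} (P_{k_t} ⋯ P_{k_1} v₀)_j ≤ q^ℓ. (This is the quantitative core of the Geometric Stochastic Domination theorem: the law obtained by applying any sequence of updates to the point mass at 0 has geometric tails, so the number of third-class particles to the right of the second-class particle is stochastically dominated by a Geometric(q) random variable.) -/

import Mathlib

open Matrix Finset

/-- The vector `v_j ∈ ℝ^{M+1}`: the law of `min(j, G)` for `G ~ Geo(q)`. -/
noncomputable def sixV (q : ℝ) (M : ℕ) (j : Fin (M + 1)) : Fin (M + 1) → ℝ :=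
  fun k =>
    if (k : ℕ) < (j : ℕ) then (1 - q) * q ^ (k : ℕ)
    else if (k : ℕ) = (j : ℕ) then q ^ (j : ℕ)
    else 0

/-- The update matrix `P_k`, equal to the identity except in rows/columns `k, k+1`. -/
noncomputable def sixP (b₁ b₂ : ℝ) (M : ℕ) (k : Fin M) :
    Matrix (Fin (M + 1)) (Fin (M + 1)) ℝ :=
  fun i j =>
    if i = k.castSucc ∧ j = k.castSucc then 1 - b₁
    else if i = k.castSucc ∧ j = k.succ then b₂
    else if i = k.succ ∧ j = k.castSucc then b₁
    else if i = k.succ ∧ j = k.succ then 1 - b₂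
    else if i = j then 1 else 0

/-- coefficient transfer matrix -/
noncomputable def sixD (b₁ b₂ : ℝ) (M : ℕ) (k : Fin M) (j i : Fin (M + 1)) : ℝ :=
  if j = k.castSucc then (if i = k.castSucc then 1 - b₂ else if i = k.succ then b₂ else 0)
  else if j = k.succ then (if i = k.castSucc then b₁ else if i = k.succ then 1 - b₁ else 0)
  else if i = j then 1 else 0

section aux
variable {b₁ b₂ q : ℝ} {M : ℕ}

lemma sixRow (k : Fin M) (w : Fin (M + 1) → ℝ) (x : Fin (M + 1)) :
    (sixP b₁ b₂ M k).mulVec w x =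
      if x = k.castSucc then (1 - b₁) * w k.castSucc + b₂ * w k.succ
      else if x = k.succ then b₁ * w k.castSucc + (1 - b₂) * w k.succ
      else w x := by
  have hne : k.castSucc ≠ k.succ := (Fin.castSucc_lt_succ : k.castSucc < k.succ).ne
  show ∑ j, sixP b₁ b₂ M k x j * w j = _
  by_cases h1 : x = k.castSucc
  · subst h1
    rw [if_pos rfl]
    have key : ∀ j, sixP b₁ b₂ M k k.castSucc j * w j =
        (if j = k.castSucc then (1 - b₁) * w j else 0) +
        (if j = k.succ then b₂ * w j else 0) := by
      intro j
      by_cases hj1 : j = k.castSucc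
      · subst hj1; simp [sixP, hne, hne.symm]
      · by_cases hj2 : j = k.succ
        · subst hj2; simp [sixP, hne, hne.symm]
        · simp [sixP, hj1, hj2, hne, Ne.symm hj1]
    rw [Finset.sum_congr rfl (fun j _ => key j), Finset.sum_add_distrib,
      Finset.sum_ite_eq' univ k.castSucc, Finset.sum_ite_eq' univ k.succ]
    simp
  · by_cases h2 : x = k.succ
    · subst h2
      rw [if_neg h1, if_pos rfl]
      have key : ∀ j, sixP b₁ b₂ M k k.succ j * w j =
          (if j = k.castSucc then b₁ * w j else 0) +
          (if j = k.succ then (1 - b₂) * w j else 0) := by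
        intro j
        by_cases hj1 : j = k.castSucc
        · subst hj1; simp [sixP, hne, hne.symm]
        · by_cases hj2 : j = k.succ
          · subst hj2; simp [sixP, hne, hne.symm]
          · simp [sixP, hj1, hj2, hne.symm, Ne.symm hj1, Ne.symm hj2]
      rw [Finset.sum_congr rfl (fun j _ => key j), Finset.sum_add_distrib,
        Finset.sum_ite_eq' univ k.castSucc, Finset.sum_ite_eq' univ k.succ]
      simp
    · rw [if_neg h1, if_neg h2]
      have key : ∀ j, sixP b₁ b₂ M k x j * w j = if j = x then w j else 0 := by
        intro j
        by_cases hj : j = x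
        · subst hj; simp [sixP, h1, h2]
        · have hxj : ¬ x = j := fun h => hj h.symm
          simp [sixP, h1, h2, hj, hxj]
      rw [Finset.sum_congr rfl (fun j _ => key j), Finset.sum_ite_eq' univ x]
      simp

lemma sixDsum (k : Fin M) (j : Fin (M + 1)) (f : Fin (M + 1) → ℝ) :
    ∑ i, sixD b₁ b₂ M k j i * f i =
      if j = k.castSucc then (1 - b₂) * f k.castSucc + b₂ * f k.succ
      else if j = k.succ then b₁ * f k.castSucc + (1 - b₁) * f k.succ
      else f j := by
  have hne : k.castSucc ≠ k.succ := (Fin.castSucc_lt_succ : k.castSucc < k.succ).ne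
  by_cases h1 : j = k.castSucc
  · subst h1; rw [if_pos rfl]
    have key : ∀ i, sixD b₁ b₂ M k k.castSucc i * f i =
        (if i = k.castSucc then (1 - b₂) * f i else 0) +
        (if i = k.succ then b₂ * f i else 0) := by
      intro i
      by_cases hi1 : i = k.castSucc
      · subst hi1; simp [sixD, hne, hne.symm]
      · by_cases hi2 : i = k.succ
        · subst hi2; simp [sixD, hne, hne.symm]
        · simp [sixD, hi1, hi2]
    rw [Finset.sum_congr rfl (fun i _ => key i), Finset.sum_add_distrib,
      Finset.sum_ite_eq' univ k.castSucc, Finset.sum_ite_eq' univ k.succ]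
    simp
  · by_cases h2 : j = k.succ
    · subst h2; rw [if_neg h1, if_pos rfl]
      have key : ∀ i, sixD b₁ b₂ M k k.succ i * f i =
          (if i = k.castSucc then b₁ * f i else 0) +
          (if i = k.succ then (1 - b₁) * f i else 0) := by
        intro i
        by_cases hi1 : i = k.castSucc
        · subst hi1; simp [sixD, hne, hne.symm]
        · by_cases hi2 : i = k.succ
          · subst hi2; simp [sixD, hne, hne.symm]
          · simp [sixD, hi1, hi2, hne.symm]
      rw [Finset.sum_congr rfl (fun i _ => key i), Finset.sum_add_distrib,
        Finset.sum_ite_eq' univ k.castSucc, Finset.sum_ite_eq' univ k.succ]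
      simp
    · rw [if_neg h1, if_neg h2]
      have key : ∀ i, sixD b₁ b₂ M k j i * f i = if i = j then f i else 0 := by
        intro i
        by_cases hi : i = j
        · subst hi; simp [sixD, h1, h2]
        · simp [sixD, h1, h2, hi]
      rw [Finset.sum_congr rfl (fun i _ => key i), Finset.sum_ite_eq' univ j]
      simp

lemma sixD_nonneg (hb₁ : 0 < b₁) (hb₁₂ : b₁ < b₂) (hb₂ : b₂ < 1) (k : Fin M)
    (j i : Fin (M + 1)) : 0 ≤ sixD b₁ b₂ M k j i := by
  unfold sixD
  split_ifs <;> linarith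

lemma sixD_rowsum (k : Fin M) (j : Fin (M + 1)) :
    ∑ i, sixD b₁ b₂ M k j i = 1 := by
  have := sixDsum (b₁ := b₁) (b₂ := b₂) (M := M) k j (fun _ => (1 : ℝ))
  simp only [mul_one] at this
  rw [this]
  split_ifs <;> ring

/-- Key step: `P_k` applied to `v_j` is the appropriate convex combination. -/
lemma sixStep (hb₁ : 0 < b₁) (hb₁₂ : b₁ < b₂) (hb₂ : b₂ < 1) (hq : q = b₁ / b₂)
    (k : Fin M) (j x : Fin (M + 1)) :
    (sixP b₁ b₂ M k).mulVec (sixV q M j) x = ∑ i, sixD b₁ b₂ M k j i * sixV q M i x := by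
  have hb₂0 : (0:ℝ) < b₂ := hb₁.trans hb₁₂
  have hqb : q * b₂ = b₁ := by rw [hq]; field_simp
  rw [sixRow, sixDsum]
  have hK : ((k.castSucc : Fin (M+1)) : ℕ) = (k : ℕ) := Fin.coe_castSucc k
  have hS : ((k.succ : Fin (M+1)) : ℕ) = (k : ℕ) + 1 := Fin.val_succ k
  by_cases h1 : x = k.castSucc
  · subst h1
    by_cases hj1 : j = k.castSucc
    · subst hj1
      simp only [if_pos rfl, sixV, hK, hS, lt_irrefl, if_false, if_neg (lt_irrefl _),
        if_pos rfl, Nat.lt_irrefl]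
      norm_num
      rw [← hqb]; ring
    · by_cases hj2 : j = k.succ
      · subst hj2
        simp only [if_neg hj1, if_pos rfl, sixV, hK, hS]
        norm_num
        rw [← hqb]; ring
      · rw [if_pos rfl, if_neg hj1, if_neg hj2]
        have hjK : (j : ℕ) ≠ (k : ℕ) := fun h => hj1 (Fin.ext (by rw [h, hK]))
        have hjS : (j : ℕ) ≠ (k : ℕ) + 1 := fun h => hj2 (Fin.ext (by rw [h, hS]))
        rcases lt_or_gt_of_ne hjK with hlt | hgt
        · have l1 : ¬ ((k:ℕ) < (j:ℕ)) := by omega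
          have l2 : ¬ ((k:ℕ) = (j:ℕ)) := by omega
          have l3 : ¬ ((k:ℕ)+1 < (j:ℕ)) := by omega
          have l4 : ¬ ((k:ℕ)+1 = (j:ℕ)) := by omega
          simp only [sixV, hK, hS, if_neg l1, if_neg l2, if_neg l3, if_neg l4]
          ring
        · have hgt' : (k:ℕ) + 1 < (j:ℕ) := by omega
          have l1 : (k:ℕ) < (j:ℕ) := by omega
          simp only [sixV, hK, hS, if_pos l1, if_pos hgt']
          rw [← hqb]; ring
  · by_cases h2 : x = k.succ
    · subst h2
      rw [if_neg h1, if_pos rfl]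
      by_cases hj1 : j = k.castSucc
      · subst hj1
        simp only [if_pos rfl, sixV, hK, hS]
        norm_num
        rw [← hqb]; ring
      · by_cases hj2 : j = k.succ
        · subst hj2
          simp only [if_neg hj1, if_pos rfl, sixV, hK, hS]
          norm_num
          rw [← hqb]; ring
        · rw [if_neg hj1, if_neg hj2]
          have hjK : (j : ℕ) ≠ (k : ℕ) := fun h => hj1 (Fin.ext (by rw [h, hK]))
          have hjS : (j : ℕ) ≠ (k : ℕ) + 1 := fun h => hj2 (Fin.ext (by rw [h, hS]))
          rcases lt_or_gt_of_ne hjK with hlt | hgt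
          · have l1 : ¬ ((k:ℕ) < (j:ℕ)) := by omega
            have l2 : ¬ ((k:ℕ) = (j:ℕ)) := by omega
            have l3 : ¬ ((k:ℕ)+1 < (j:ℕ)) := by omega
            have l4 : ¬ ((k:ℕ)+1 = (j:ℕ)) := by omega
            simp only [sixV, hK, hS, if_neg l1, if_neg l2, if_neg l3, if_neg l4]
            ring
          · have hgt' : (k:ℕ) + 1 < (j:ℕ) := by omega
            have l1 : (k:ℕ) < (j:ℕ) := by omega
            simp only [sixV, hK, hS, if_pos l1, if_pos hgt']
            rw [← hqb]; ring
    · rw [if_neg h1, if_neg h2]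
      have hxK : (x : ℕ) ≠ (k : ℕ) := fun h => h1 (Fin.ext (by rw [h, hK]))
      have hxS : (x : ℕ) ≠ (k : ℕ) + 1 := fun h => h2 (Fin.ext (by rw [h, hS]))
      by_cases hj1 : j = k.castSucc
      · subst hj1
        rw [if_pos rfl]
        rcases lt_or_gt_of_ne hxK with hlt | hgt
        · have l1 : (x:ℕ) < (k:ℕ) := hlt
          have l2 : (x:ℕ) < (k:ℕ)+1 := by omega
          simp only [sixV, hK, hS, if_pos l1, if_pos l2]
          ring
        · have l1 : ¬ ((x:ℕ) < (k:ℕ)) := by omega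
          have l2 : ¬ ((x:ℕ) = (k:ℕ)) := hxK
          have l3 : ¬ ((x:ℕ) < (k:ℕ)+1) := by omega
          have l4 : ¬ ((x:ℕ) = (k:ℕ)+1) := hxS
          simp only [sixV, hK, hS, if_neg l1, if_neg l2, if_neg l3, if_neg l4]
          ring
      · by_cases hj2 : j = k.succ
        · subst hj2
          rw [if_neg hj1, if_pos rfl]
          rcases lt_or_gt_of_ne hxK with hlt | hgt
          · have l1 : (x:ℕ) < (k:ℕ) := hlt
            have l2 : (x:ℕ) < (k:ℕ)+1 := by omega
            simp only [sixV, hK, hS, if_pos l1, if_pos l2]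
            ring
          · have l1 : ¬ ((x:ℕ) < (k:ℕ)) := by omega
            have l2 : ¬ ((x:ℕ) = (k:ℕ)) := hxK
            have l3 : ¬ ((x:ℕ) < (k:ℕ)+1) := by omega
            have l4 : ¬ ((x:ℕ) = (k:ℕ)+1) := hxS
            simp only [sixV, hK, hS, if_neg l1, if_neg l2, if_neg l3, if_neg l4]
            ring
        · rw [if_neg hj1, if_neg hj2]

/-- One update preserves being a convex combination of the `v_j`'s. -/
lemma sixMixStep (hb₁ : 0 < b₁) (hb₁₂ : b₁ < b₂) (hb₂ : b₂ < 1) (hq : q = b₁ / b₂)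
    (k : Fin M) (c : Fin (M + 1) → ℝ) (hc0 : ∀ i, 0 ≤ c i) (hc1 : ∑ i, c i = 1)
    (w : Fin (M + 1) → ℝ) (hw : ∀ x, w x = ∑ j, c j * sixV q M j x) :
    ∃ c' : Fin (M + 1) → ℝ, (∀ i, 0 ≤ c' i) ∧ (∑ i, c' i = 1) ∧
      ∀ x, (sixP b₁ b₂ M k).mulVec w x = ∑ j, c' j * sixV q M j x := by
  refine ⟨fun i => ∑ j, c j * sixD b₁ b₂ M k j i, ?_, ?_, ?_⟩
  · intro i
    exact Finset.sum_nonneg fun j _ => mul_nonneg (hc0 j) (sixD_nonneg hb₁ hb₁₂ hb₂ k j i)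
  · rw [Finset.sum_comm]
    calc ∑ j, ∑ i, c j * sixD b₁ b₂ M k j i
        = ∑ j, c j * ∑ i, sixD b₁ b₂ M k j i := by
          exact Finset.sum_congr rfl fun j _ => (Finset.mul_sum _ _ _).symm
      _ = 1 := by simp only [sixD_rowsum, mul_one, hc1]
  · intro x
    have expand : (sixP b₁ b₂ M k).mulVec w x
        = ∑ j, c j * ((sixP b₁ b₂ M k).mulVec (sixV q M j) x) := by
      show ∑ y, sixP b₁ b₂ M k x y * w y = _
      calc ∑ y, sixP b₁ b₂ M k x y * w y
          = ∑ y, ∑ j, c j * (sixP b₁ b₂ M k x y * sixV q M j y) := by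
            refine Finset.sum_congr rfl fun y _ => ?_
            rw [hw y, Finset.mul_sum]
            exact Finset.sum_congr rfl fun j _ => by ring
        _ = ∑ j, ∑ y, c j * (sixP b₁ b₂ M k x y * sixV q M j y) := Finset.sum_comm
        _ = ∑ j, c j * ((sixP b₁ b₂ M k).mulVec (sixV q M j) x) := by
            refine Finset.sum_congr rfl fun j _ => ?_
            rw [← Finset.mul_sum]
            rfl
    rw [expand]
    calc ∑ j, c j * ((sixP b₁ b₂ M k).mulVec (sixV q M j) x)
        = ∑ j, c j * ∑ i, sixD b₁ b₂ M k j i * sixV q M i x := by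
          exact Finset.sum_congr rfl fun j _ => by rw [sixStep hb₁ hb₁₂ hb₂ hq]
      _ = ∑ j, ∑ i, (c j * sixD b₁ b₂ M k j i) * sixV q M i x := by
          refine Finset.sum_congr rfl fun j _ => ?_
          rw [Finset.mul_sum]
          exact Finset.sum_congr rfl fun i _ => by ring
      _ = ∑ i, (∑ j, c j * sixD b₁ b₂ M k j i) * sixV q M i x := by
          rw [Finset.sum_comm]
          exact Finset.sum_congr rfl fun i _ => (Finset.sum_mul _ _ _).symm

/-- Tail bound for the basic vectors. -/
lemma sixVtail (hq0 : 0 ≤ q) (i ℓ : Fin (M + 1)) :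
    ∑ x ∈ Finset.univ.filter (fun x => ℓ ≤ x), sixV q M i x ≤ q ^ (ℓ : ℕ) := by
  have conv : ∑ x ∈ Finset.univ.filter (fun x => ℓ ≤ x), sixV q M i x
      = ∑ n ∈ Finset.range (M + 1), (if (ℓ:ℕ) ≤ n then
          (if n < (i:ℕ) then (1-q) * q ^ n else if n = (i:ℕ) then q ^ (i:ℕ) else 0) else 0) := by
    rw [Finset.sum_filter]
    rw [← Fin.sum_univ_eq_sum_range (fun n => (if (ℓ:ℕ) ≤ n then
          (if n < (i:ℕ) then (1-q) * q ^ n else if n = (i:ℕ) then q ^ (i:ℕ) else 0) else 0))]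
    refine Finset.sum_congr rfl fun x _ => ?_
    by_cases h : ℓ ≤ x
    · rw [if_pos h, if_pos (by exact_mod_cast h)]
      rfl
    · rw [if_neg h, if_neg (by exact_mod_cast h)]
  rw [conv]
  by_cases hli : (ℓ:ℕ) ≤ (i:ℕ)
  · set F : ℕ → ℝ := fun n => if n ≤ (i:ℕ) then q ^ (max n (ℓ:ℕ)) else 0 with hF
    have tele : ∀ n, (if (ℓ:ℕ) ≤ n then
        (if n < (i:ℕ) then (1-q) * q ^ n else if n = (i:ℕ) then q ^ (i:ℕ) else 0) else 0)
        = F n - F (n + 1) := by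
      intro n
      by_cases hn : (ℓ:ℕ) ≤ n
      · rw [if_pos hn]
        have hm1 : max n (ℓ:ℕ) = n := max_eq_left hn
        have hm2 : max (n+1) (ℓ:ℕ) = n+1 := max_eq_left (by omega)
        rcases lt_trichotomy n (i:ℕ) with h | h | h
        · rw [if_pos h, hF]
          simp only [hm1, hm2, if_pos h.le, if_pos (by omega : n + 1 ≤ (i:ℕ))]
          ring
        · rw [if_neg (by omega), if_pos h, hF]
          simp only
          split_ifs with hA hB hB'
          · exact absurd hB (by omega)
          · rw [hm1, h]; ring
          · exact absurd hB' (by omega)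
          · exact absurd h (by omega)
        · rw [if_neg (by omega), if_neg (by omega), hF]
          simp only [if_neg (by omega : ¬ (n ≤ (i:ℕ))),
            if_neg (by omega : ¬ (n + 1 ≤ (i:ℕ)))]
          ring
      · rw [if_neg hn, hF]
        have hm1 : max n (ℓ:ℕ) = (ℓ:ℕ) := max_eq_right (by omega)
        have hm2 : max (n+1) (ℓ:ℕ) = (ℓ:ℕ) := max_eq_right (by omega)
        simp only [hm1, hm2, if_pos (by omega : n ≤ (i:ℕ)), if_pos (by omega : n + 1 ≤ (i:ℕ))]
        ring
    calc ∑ n ∈ Finset.range (M + 1), (if (ℓ:ℕ) ≤ n then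
          (if n < (i:ℕ) then (1-q) * q ^ n else if n = (i:ℕ) then q ^ (i:ℕ) else 0) else 0)
        = ∑ n ∈ Finset.range (M + 1), (F n - F (n + 1)) :=
          Finset.sum_congr rfl fun n _ => tele n
      _ = F 0 - F (M + 1) := Finset.sum_range_sub' F (M + 1)
      _ ≤ q ^ (ℓ:ℕ) := by
          rw [hF]
          simp only [if_pos (Nat.zero_le _), if_neg (by omega : ¬ (M + 1 ≤ (i:ℕ)))]
          have : max 0 (ℓ:ℕ) = (ℓ:ℕ) := max_eq_right (Nat.zero_le _)
          rw [this]
          have hi : (i:ℕ) ≤ M := Nat.lt_succ_iff.mp i.isLt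
          simp
  · have allz : ∀ n ∈ Finset.range (M + 1), (if (ℓ:ℕ) ≤ n then
        (if n < (i:ℕ) then (1-q) * q ^ n else if n = (i:ℕ) then q ^ (i:ℕ) else 0) else 0)
        = (0:ℝ) := by
      intro n _
      by_cases hn : (ℓ:ℕ) ≤ n
      · rw [if_pos hn, if_neg (by omega), if_neg (by omega)]
      · rw [if_neg hn]
    rw [Finset.sum_congr rfl allz, Finset.sum_const, smul_zero]
    positivity

end aux

/-- Geometric stochastic domination: the law obtained by applying any sequence of
updates to the point mass at `0` has geometric tails. -/
theorem stmt3 (b₁ b₂ q : ℝ) (hb₁ : 0 < b₁) (hb₁₂ : b₁ < b₂) (hb₂ : b₂ < 1)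
    (hq : q = b₁ / b₂) (M : ℕ) (hM : 1 ≤ M) (ks : List (Fin M)) (ℓ : Fin (M + 1)) :
    ∑ j ∈ Finset.univ.filter (fun j => ℓ ≤ j),
        ((ks.map (sixP b₁ b₂ M)).prod.mulVec (sixV q M 0)) j ≤ q ^ (ℓ : ℕ) := by
  have hb₂0 : (0:ℝ) < b₂ := hb₁.trans hb₁₂
  have hq0 : 0 ≤ q := by rw [hq]; positivity
  obtain ⟨c, hc0, hc1, hw⟩ : ∃ c : Fin (M+1) → ℝ, (∀ i, 0 ≤ c i) ∧ (∑ i, c i = 1) ∧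
      ∀ x, ((ks.map (sixP b₁ b₂ M)).prod.mulVec (sixV q M 0)) x
        = ∑ j, c j * sixV q M j x := by
    induction ks with
    | nil =>
      refine ⟨fun j => if j = 0 then 1 else 0, ?_, ?_, ?_⟩
      · intro i; dsimp only; split <;> norm_num
      · simp
      · intro x
        simp only [List.map_nil, List.prod_nil, Matrix.one_mulVec]
        simp only [ite_mul, one_mul, zero_mul]
        rw [Finset.sum_ite_eq' Finset.univ (0 : Fin (M+1)) (fun j => sixV q M j x)]
        simp
    | cons k ks ih =>
      obtain ⟨c, hc0, hc1, hw⟩ := ih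
      obtain ⟨c', h0, h1, h2⟩ := sixMixStep hb₁ hb₁₂ hb₂ hq k c hc0 hc1 _ hw
      refine ⟨c', h0, h1, ?_⟩
      intro x
      rw [List.map_cons, List.prod_cons, ← Matrix.mulVec_mulVec]
      exact h2 x
  calc ∑ x ∈ Finset.univ.filter (fun x => ℓ ≤ x),
        ((ks.map (sixP b₁ b₂ M)).prod.mulVec (sixV q M 0)) x
      = ∑ x ∈ Finset.univ.filter (fun x => ℓ ≤ x), ∑ j, c j * sixV q M j x :=
        Finset.sum_congr rfl fun x _ => hw x
    _ = ∑ j, c j * ∑ x ∈ Finset.univ.filter (fun x => ℓ ≤ x), sixV q M j x := by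
        rw [Finset.sum_comm]
        exact Finset.sum_congr rfl fun j _ => (Finset.mul_sum _ _ _).symm
    _ ≤ ∑ j, c j * q ^ (ℓ : ℕ) :=
        Finset.sum_le_sum fun j _ =>
          mul_le_mul_of_nonneg_left (sixVtail hq0 j ℓ) (hc0 j)
    _ = q ^ (ℓ : ℕ) := by rw [← Finset.sum_mul, hc1, one_mul]
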